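/- Let α₀, δ be coprime Gaussian integers, α_k = α₀ + k·δ, and let β ∈ ℤ[i] be a nonzero Gaussian integer dividing α_t for some t ∈ ℤ. Write δ = c + d·i and define ν(x+iy) = (x²+y²)/gcd(x,y). Assume gcd(c,d) = 1. Then for any k ∈ ℤ, β divides α_k if and only if k ≡ t (mod ν(β)). -/

import Mathlib

/-- ν(x+iy) = (x²+y²)/gcd(x,y) for a Gaussian integer. -/
def nu (β : GaussianInt) : ℤ := (β.re ^ 2 + β.im ^ 2) / Int.gcd β.re β.im

lemma gauss_dvd_int (β : GaussianInt) (hβ : β ≠ 0) (n : ℤ) :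
    β ∣ (n : GaussianInt) ↔ nu β ∣ n := by
  set x := β.re with hx
  set y := β.im with hy
  set g : ℤ := (Int.gcd x y : ℤ) with hgdef
  have hg0 : g ≠ 0 := by
    simp only [hgdef, ne_eq, Int.natCast_eq_zero, Int.gcd_eq_zero_iff, not_and]
    intro hx0 hy0
    exact absurd (Zsqrtd.ext_iff.mpr ⟨by simpa using hx0, by simpa using hy0⟩) hβ
  have hgx : g ∣ x := Int.gcd_dvd_left x y
  have hgy : g ∣ y := Int.gcd_dvd_right x y
  have hgN : g ∣ x ^ 2 + y ^ 2 := dvd_add (hgx.trans (dvd_pow_self x two_ne_zero))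
    (hgy.trans (dvd_pow_self y two_ne_zero))
  have hNnu : nu β * g = x ^ 2 + y ^ 2 := by
    rw [nu, ← hx, ← hy, ← hgdef, Int.ediv_mul_cancel hgN]
  have hstar : star β ≠ 0 := by
    intro hc; exact hβ (by simpa using congrArg star hc)
  have hmul : β * star β = ((x ^ 2 + y ^ 2 : ℤ) : GaussianInt) := by
    rw [Zsqrtd.ext_iff]
    constructor <;>
      simp only [Zsqrtd.re_mul, Zsqrtd.im_mul, Zsqrtd.re_star, Zsqrtd.im_star,
        Zsqrtd.re_intCast, Zsqrtd.im_intCast, ← hx, ← hy] <;> ring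
  constructor
  · intro hd
    have h1 : β * star β ∣ (n : GaussianInt) * star β := mul_dvd_mul_right hd _
    rw [hmul] at h1
    rw [Zsqrtd.intCast_dvd] at h1
    obtain ⟨h1r, h1i⟩ := h1
    have hre : ((n : GaussianInt) * star β).re = n * x := by
      simp [Zsqrtd.re_mul, ← hx]
    have him : ((n : GaussianInt) * star β).im = -(n * y) := by
      simp [Zsqrtd.im_mul, ← hy]
    rw [hre] at h1r
    rw [him, dvd_neg] at h1i
    -- Bezout: g = x * a + y * b
    have hbez : g = x * Int.gcdA x y + y * Int.gcdB x y := Int.gcd_eq_gcd_ab x y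
    have hNg : (x ^ 2 + y ^ 2) ∣ n * g := by
      rw [hbez, mul_add]
      exact dvd_add (by rw [← mul_assoc]; exact h1r.mul_right _)
        (by rw [← mul_assoc]; exact h1i.mul_right _)
    rw [← hNnu] at hNg
    exact (mul_dvd_mul_iff_right hg0).mp hNg
  · intro hd
    have hNg : (x ^ 2 + y ^ 2) ∣ n * x := by
      obtain ⟨m, hm⟩ := hd
      obtain ⟨u, hu⟩ := hgx
      refine ⟨m * u, ?_⟩
      calc n * x = (nu β * g) * (m * u) := by rw [hm, hu]; ring
        _ = (x ^ 2 + y ^ 2) * (m * u) := by rw [hNnu]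
    have hNg' : (x ^ 2 + y ^ 2) ∣ n * y := by
      obtain ⟨m, hm⟩ := hd
      obtain ⟨u, hu⟩ := hgy
      refine ⟨m * u, ?_⟩
      calc n * y = (nu β * g) * (m * u) := by rw [hm, hu]; ring
        _ = (x ^ 2 + y ^ 2) * (m * u) := by rw [hNnu]
    have h1 : ((x ^ 2 + y ^ 2 : ℤ) : GaussianInt) ∣ (n : GaussianInt) * star β := by
      rw [Zsqrtd.intCast_dvd]
      constructor
      · simpa [Zsqrtd.re_mul, ← hx] using hNg
      · simp only [Zsqrtd.im_mul]
        simpa [← hy] using hNg'.neg_right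
    rw [← hmul] at h1
    exact (mul_dvd_mul_iff_right hstar).mp h1

theorem divisibility_periodic (α₀ δ : GaussianInt) (h : IsCoprime α₀ δ)
    (hδ : Int.gcd δ.re δ.im = 1)
    (β : GaussianInt) (hβ : β ≠ 0) (t : ℤ) (ht : β ∣ α₀ + (t : GaussianInt) * δ) (k : ℤ) :
    β ∣ α₀ + (k : GaussianInt) * δ ↔ k ≡ t [ZMOD nu β] := by
  have hcop : IsCoprime β δ := by
    have h1 : IsCoprime (α₀ + (t : GaussianInt) * δ) δ :=
      (IsCoprime.add_mul_right_left_iff).mpr h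
    exact h1.of_isCoprime_of_dvd_left ht
  have heq : α₀ + (k : GaussianInt) * δ
      = (α₀ + (t : GaussianInt) * δ) + ((k - t : ℤ) : GaussianInt) * δ := by
    push_cast; ring
  have key : β ∣ α₀ + (k : GaussianInt) * δ ↔ β ∣ ((k - t : ℤ) : GaussianInt) := by
    constructor
    · intro hk
      have h2 : β ∣ ((k - t : ℤ) : GaussianInt) * δ := by
        have := dvd_sub hk ht
        rw [heq] at this
        simpa using this
      exact hcop.dvd_of_dvd_mul_right h2
    · intro hk
      rw [heq]
      exact dvd_add ht (hk.mul_right δ)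
  rw [key, gauss_dvd_int β hβ, Int.modEq_iff_dvd]
  exact dvd_sub_comm
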